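/- arXiv:2404.00187 — 2 statements merged into one kernel-verified Lean document; each statement's English description precedes it below -/
import Mathlib

section
/- Let A be the adjacency matrix of a finite simple undirected graph, D its degree matrix, and define P₀ = I, P₁ = A, P₂ = A² − D, and for k ≥ 3, P_k = A·P_{k−1} − (D − I)·P_{k−2}. Then (P_k)_{ij} equals the number of non-backtracking walks of length k from i to j. -/
/-- Number of non-backtracking walks of length `k` from `i` to `j` in the graph with
adjacency matrix `A`. -/
noncomputable def nbtwCount {n : ℕ} (A : Matrix (Fin n) (Fin n) ℝ) (k : ℕ) (i j : Fin n) : ℕ :=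
  Nat.card {w : Fin (k + 1) → Fin n //
    w 0 = i ∧ w (Fin.last k) = j ∧ (∀ m : Fin k, A (w m.castSucc) (w m.succ) = 1) ∧
      ∀ m : Fin (k + 1), ∀ h : (m : ℕ) + 2 ≤ k, w ⟨(m : ℕ) + 2, by omega⟩ ≠ w m}

namespace NBTaux

variable {n : ℕ} (A : Matrix (Fin n) (Fin n) ℝ)

/-- val-based walk predicate -/
def P (k : ℕ) (i j : Fin n) (w : Fin (k + 1) → Fin n) : Prop :=
  w 0 = i ∧ w (Fin.last k) = j ∧
    (∀ t : ℕ, ∀ h : t < k, A (w ⟨t, by omega⟩) (w ⟨t + 1, by omega⟩) = 1) ∧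
    ∀ t : ℕ, ∀ h : t + 2 ≤ k, w ⟨t + 2, by omega⟩ ≠ w ⟨t, by omega⟩

lemma nbtwCount_eq (k : ℕ) (i j : Fin n) :
    nbtwCount A k i j = Nat.card {w : Fin (k+1) → Fin n // P A k i j w} := by
  apply Nat.card_congr
  apply Equiv.subtypeEquivRight
  intro w
  unfold P
  refine and_congr_right fun _ => and_congr_right fun _ => and_congr ?_ ?_
  · constructor
    · intro h t ht
      have := h ⟨t, ht⟩
      simpa using this
    · intro h m
      have := h m.1 m.2
      convert this using 3 <;> rfl
  · constructor
    · intro h t ht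
      have := h ⟨t, by omega⟩ (by simpa using ht)
      simpa using this
    · intro h m hm
      exact h m.1 hm

/-- degree -/
noncomputable def d (i : Fin n) : ℕ := Nat.card {l : Fin n // A i l = 1}

lemma cons_mk_zero {α : Type*} {k : ℕ} (x : α) (w : Fin (k + 1) → α) (h : 0 < k + 2) :
    (Fin.cons x w : Fin (k + 2) → α) ⟨0, h⟩ = x := rfl

lemma cons_mk_succ {α : Type*} {k : ℕ} (x : α) (w : Fin (k + 1) → α) (t : ℕ)
    (h : t + 1 < k + 2) : (Fin.cons x w : Fin (k + 2) → α) ⟨t + 1, h⟩ = w ⟨t, by omega⟩ :=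
  @Fin.cons_succ (k + 1) (fun _ => α) x w ⟨t, Nat.lt_of_succ_lt_succ h⟩

lemma P_cons (k : ℕ) (j x : Fin n) (v : Fin (k + 2) → Fin n) :
    P A (k + 2) x j (Fin.cons x v) ↔ A x (v 0) = 1 ∧ v 1 ≠ x ∧ P A (k + 1) (v 0) j v := by
  constructor
  · rintro ⟨h0, hlast, hedge, hnbt⟩
    refine ⟨?_, ?_, rfl, ?_, ?_, ?_⟩
    · have := hedge 0 (by omega)
      rwa [cons_mk_zero, cons_mk_succ] at this
    · have := hnbt 0 (by omega)
      rwa [cons_mk_succ, cons_mk_zero] at this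
    · have : (Fin.last (k + 2) : Fin (k + 3)) = ⟨k + 2, by omega⟩ := rfl
      rw [this, cons_mk_succ] at hlast
      exact hlast
    · intro t ht
      have := hedge (t + 1) (by omega)
      rwa [cons_mk_succ, cons_mk_succ] at this
    · intro t ht
      have := hnbt (t + 1) (by omega)
      rwa [cons_mk_succ, cons_mk_succ] at this
  · rintro ⟨hx, h1, h0, hlast, hedge, hnbt⟩
    refine ⟨rfl, ?_, ?_, ?_⟩
    · have : (Fin.last (k + 2) : Fin (k + 3)) = ⟨k + 2, by omega⟩ := rfl
      rw [this, cons_mk_succ]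
      exact hlast
    · rintro (_ | t) ht
      · rw [cons_mk_zero, cons_mk_succ]
        rwa [show (⟨0, by omega⟩ : Fin (k + 2)) = 0 from rfl, h0]
      · rw [cons_mk_succ, cons_mk_succ]
        exact hedge t (by omega)
    · rintro (_ | t) ht
      · rw [cons_mk_succ, cons_mk_zero]
        rwa [show (⟨1, by omega⟩ : Fin (k + 2)) = 1 from rfl]
      · rw [cons_mk_succ, cons_mk_succ]
        exact hnbt t (by omega)

lemma P_edge0 {k : ℕ} {i j : Fin n} {v : Fin (k + 2) → Fin n} (h : P A (k + 1) i j v) :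
    A i (v 1) = 1 := by
  have := h.2.2.1 0 (by omega)
  rwa [show (⟨0, by omega⟩ : Fin (k + 2)) = 0 from rfl,
    show (⟨0 + 1, by omega⟩ : Fin (k + 2)) = 1 from rfl, h.1] at this

/-- prepend equiv: good walks -/
def E1 (k : ℕ) (i j : Fin n) :
    {p : Fin n × (Fin (k + 3) → Fin n) //
        (A i p.1 = 1 ∧ P A (k + 2) p.1 j p.2) ∧ ¬ p.2 1 = i} ≃
      {w : Fin (k + 4) → Fin n // P A (k + 3) i j w} where
  toFun p := ⟨Fin.cons i p.1.2, by
    obtain ⟨⟨hA, hP⟩, h1⟩ := p.2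
    refine (P_cons A (k + 1) j i p.1.2).mpr ⟨?_, h1, ?_⟩
    · rwa [hP.1]
    · rwa [hP.1]⟩
  invFun w := ⟨(w.1 1, Fin.tail w.1), by
    obtain ⟨w, hP⟩ := w
    have hw : Fin.cons i (Fin.tail w) = w := by
      have h := Fin.cons_self_tail w
      rwa [hP.1] at h
    have hP' : P A (k + 3) i j (Fin.cons i (Fin.tail w)) := by rw [hw]; exact hP
    have hPc := (P_cons A (k + 1) j i (Fin.tail w)).mp hP'
    exact ⟨⟨hPc.1, hPc.2.2⟩, hPc.2.1⟩⟩
  left_inv p := by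
    apply Subtype.ext
    obtain ⟨⟨l, u⟩, ⟨⟨hA, hP⟩, h1⟩⟩ := p
    refine Prod.ext ?_ rfl
    exact hP.1
  right_inv w := by
    obtain ⟨w, hP⟩ := w
    apply Subtype.ext
    show Fin.cons i (Fin.tail w) = w
    have h := Fin.cons_self_tail w
    rwa [hP.1] at h

/-- bad walks equiv -/
def E2 (hs : A.IsSymm) (k : ℕ) (i j : Fin n) :
    {p : Fin n × (Fin (k + 3) → Fin n) //
        (A i p.1 = 1 ∧ P A (k + 2) p.1 j p.2) ∧ p.2 1 = i} ≃
      Σ v : {v : Fin (k + 2) → Fin n // P A (k + 1) i j v},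
        {l : Fin n // A i l = 1 ∧ l ≠ v.1 1} where
  toFun p := ⟨⟨Fin.tail p.1.2, by
      obtain ⟨⟨hA, hP⟩, h1⟩ := p.2
      have hw : p.1.2 = Fin.cons p.1.1 (Fin.tail p.1.2) := by
        rw [← hP.1]; exact (Fin.cons_self_tail p.1.2).symm
      have hPc := (P_cons A k j p.1.1 (Fin.tail p.1.2)).mp (hw ▸ hP)
      have ht0 : Fin.tail p.1.2 0 = i := h1
      exact ⟨ht0, hPc.2.2.2⟩⟩,
    ⟨p.1.1, p.2.1.1, by
      obtain ⟨⟨hA, hP⟩, h1⟩ := p.2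
      have hw : p.1.2 = Fin.cons p.1.1 (Fin.tail p.1.2) := by
        rw [← hP.1]; exact (Fin.cons_self_tail p.1.2).symm
      have hPc := (P_cons A k j p.1.1 (Fin.tail p.1.2)).mp (hw ▸ hP)
      exact fun e => hPc.2.1 e.symm⟩⟩
  invFun q := ⟨(q.2.1, Fin.cons q.2.1 q.1.1), by
    refine ⟨⟨q.2.2.1, ?_⟩, ?_⟩
    · refine (P_cons A k j q.2.1 q.1.1).mpr ⟨?_, ?_, ?_⟩
      · rw [q.1.2.1, hs.apply]; exact q.2.2.1
      · exact fun e => q.2.2.2 e.symm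
      · exact ⟨rfl, q.1.2.2⟩
    · show q.1.1 0 = i
      exact q.1.2.1⟩
  left_inv p := by
    apply Subtype.ext
    obtain ⟨⟨l, u⟩, ⟨⟨hA, hP⟩, h1⟩⟩ := p
    refine Prod.ext rfl ?_
    show Fin.cons l (Fin.tail u) = u
    have h0 : u 0 = l := hP.1
    rw [← h0]; exact Fin.cons_self_tail u
  right_inv q := rfl

def prodSub {α β : Type*} (C : α → β → Prop) :
    {p : α × β // C p.1 p.2} ≃ Σ a : α, {b : β // C a b} where
  toFun p := ⟨p.1.1, p.1.2, p.2⟩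
  invFun q := ⟨(q.1, q.2.1), q.2.2⟩
  left_inv p := rfl
  right_inv q := rfl

lemma natCard_sigma {ι : Type*} [Fintype ι] (C : ι → Type*) [∀ i, Finite (C i)] :
    Nat.card (Σ i, C i) = ∑ i, Nat.card (C i) := by
  haveI := fun i => Fintype.ofFinite (C i)
  simp only [Nat.card_eq_fintype_card]
  exact Fintype.card_sigma

lemma card_split {α : Type*} [Finite α] (p q : α → Prop) :
    Nat.card {x // p x} =
      Nat.card {x // p x ∧ ¬ q x} + Nat.card {x // p x ∧ q x} := by
  classical
  haveI := Fintype.ofFinite α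
  simp only [Nat.card_eq_fintype_card, Fintype.card_subtype]
  rw [← Finset.card_filter_add_card_filter_not (s := Finset.univ.filter p) q]
  simp only [Finset.filter_filter]
  rw [Nat.add_comm]

lemma card_ne (i x : Fin n) (hx : A i x = 1) :
    Nat.card {l : Fin n // A i l = 1 ∧ l ≠ x} = d A i - 1 := by
  classical
  simp only [d, Nat.card_eq_fintype_card, Fintype.card_subtype]
  have : Finset.univ.filter (fun l => A i l = 1 ∧ l ≠ x) =
      (Finset.univ.filter (fun l => A i l = 1)).erase x := by
    ext l
    simp [Finset.mem_erase, and_comm]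
  rw [this, Finset.card_erase_of_mem (by simp [hx])]

lemma key (hs : A.IsSymm) (k : ℕ) (i j : Fin n) :
    (∑ l, if A i l = 1 then Nat.card {u : Fin (k + 3) → Fin n // P A (k + 2) l j u} else 0)
      = Nat.card {w : Fin (k + 4) → Fin n // P A (k + 3) i j w}
        + Nat.card {v : Fin (k + 2) → Fin n // P A (k + 1) i j v} * (d A i - 1) := by
  classical
  have h1 : (∑ l, if A i l = 1 then
        Nat.card {u : Fin (k + 3) → Fin n // P A (k + 2) l j u} else 0)
      = Nat.card {p : Fin n × (Fin (k + 3) → Fin n) //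
          A i p.1 = 1 ∧ P A (k + 2) p.1 j p.2} := by
    rw [Nat.card_congr (prodSub fun l u => A i l = 1 ∧ P A (k + 2) l j u),
      natCard_sigma]
    apply Finset.sum_congr rfl
    intro l _
    split
    next h =>
      exact (Nat.card_congr (Equiv.subtypeEquivRight fun u => and_iff_right h)).symm
    next h =>
      haveI : IsEmpty {u : Fin (k + 3) → Fin n // A i l = 1 ∧ P A (k + 2) l j u} :=
        ⟨fun u => h u.2.1⟩
      exact (Nat.card_of_isEmpty).symm
  rw [h1, card_split _ (fun p => p.2 1 = i), Nat.card_congr (E1 A k i j),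
    Nat.card_congr (E2 A hs k i j), natCard_sigma]
  congr 1
  trans (∑ _v : {v : Fin (k + 2) → Fin n // P A (k + 1) i j v}, (d A i - 1))
  · exact Finset.sum_congr rfl fun v _ => card_ne A i (v.1 1) (P_edge0 A v.2)
  · rw [Finset.sum_const, Finset.card_univ, smul_eq_mul, Nat.card_eq_fintype_card]

lemma card0 (i j : Fin n) :
    Nat.card {w : Fin 1 → Fin n // P A 0 i j w} = if i = j then 1 else 0 := by
  split
  next h =>
    subst h
    haveI : Unique {w : Fin 1 → Fin n // P A 0 i i w} :=
      { default := ⟨fun _ => i, rfl, rfl, fun t ht => absurd ht (by omega),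
          fun t ht => absurd ht (by omega)⟩
        uniq := fun a => Subtype.ext (funext fun m => by
          rw [Subsingleton.elim m 0]; exact a.2.1) }
    exact Nat.card_unique
  next h =>
    haveI : IsEmpty {w : Fin 1 → Fin n // P A 0 i j w} :=
      ⟨fun w => by
        obtain ⟨w, h0, hl, -, -⟩ := w
        exact h (by rw [← h0]; exact hl)⟩
    exact Nat.card_of_isEmpty

lemma card1 (i j : Fin n) :
    Nat.card {w : Fin 2 → Fin n // P A 1 i j w} = if A i j = 1 then 1 else 0 := by
  split
  next h =>
    haveI : Unique {w : Fin 2 → Fin n // P A 1 i j w} :=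
      { default := ⟨Fin.cons i (fun _ => j), rfl, rfl, by
          rintro (_ | t) ht
          · exact h
          · omega, fun t ht => absurd ht (by omega)⟩
        uniq := fun a => Subtype.ext (funext fun m => by
          obtain ⟨(_ | _ | m), hm⟩ := m
          · exact a.2.1
          · exact a.2.2.1
          · omega) }
    exact Nat.card_unique
  next h =>
    haveI : IsEmpty {w : Fin 2 → Fin n // P A 1 i j w} := ⟨fun w => by
      have h2 : A (w.1 0) (w.1 (Fin.last 1)) = 1 := w.2.2.2.1 0 (by omega)
      rw [w.2.1, w.2.2.1] at h2
      exact h h2⟩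
    exact Nat.card_of_isEmpty

lemma card2 (i j : Fin n) :
    Nat.card {w : Fin 3 → Fin n // P A 2 i j w}
      = Nat.card {l : Fin n // (A i l = 1 ∧ A l j = 1) ∧ i ≠ j} := by
  apply Nat.card_congr
  refine ⟨fun w => ⟨w.1 1, ⟨?_, ?_⟩, ?_⟩,
    fun l => ⟨Fin.cons i (Fin.cons l.1 (fun _ => j)), rfl, rfl, ?_, ?_⟩, ?_, ?_⟩
  · have h2 : A (w.1 0) (w.1 1) = 1 := w.2.2.2.1 0 (by omega)
    rwa [w.2.1] at h2
  · have h2 : A (w.1 1) (w.1 (Fin.last 2)) = 1 := w.2.2.2.1 1 (by omega)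
    rwa [w.2.2.1] at h2
  · intro e
    apply w.2.2.2.2 0 (by omega)
    have hl : w.1 (Fin.last 2) = j := w.2.2.1
    have h0 : w.1 0 = i := w.2.1
    show w.1 (Fin.last 2) = w.1 0
    rw [hl, h0, e]
  · rintro (_ | _ | t) ht
    · exact l.2.1.1
    · exact l.2.1.2
    · omega
  · rintro (_ | t) ht
    · exact fun e => l.2.2 (by
        have : j = i := e
        exact this.symm)
    · omega
  · intro w
    apply Subtype.ext
    funext m
    obtain ⟨(_ | _ | _ | m), hm⟩ := m
    · exact w.2.1.symm
    · rfl
    · exact w.2.2.1.symm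
    · omega
  · intro l
    apply Subtype.ext
    rfl

lemma card_real (p : Fin n → Prop) [DecidablePred p] :
    ((Nat.card {l : Fin n // p l} : ℕ) : ℝ) = ∑ l, if p l then (1 : ℝ) else 0 := by
  classical
  rw [Nat.card_eq_fintype_card, Fintype.card_subtype, Finset.sum_boole]

end NBTaux

/-- The NBTW matrix recursion: `P₀ = I`, `P₁ = A`, `P₂ = A² − D`,
`P_k = A P_{k−1} − (D − I) P_{k−2}` for `k ≥ 3`. -/
noncomputable def nbtwP {n : ℕ} (A D : Matrix (Fin n) (Fin n) ℝ) : ℕ → Matrix (Fin n) (Fin n) ℝ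
  | 0 => 1
  | 1 => A
  | 2 => A * A - D
  | (k + 3) => A * nbtwP A D (k + 2) - (D - 1) * nbtwP A D (k + 1)

theorem nbtwP_counts_nbtw_walks {n : ℕ} (A : Matrix (Fin n) (Fin n) ℝ)
    (hsymm : A.IsSymm) (h01 : ∀ i j, A i j = 0 ∨ A i j = 1) (hdiag : ∀ i, A i i = 0)
    (D : Matrix (Fin n) (Fin n) ℝ) (hD : D = Matrix.diagonal (fun i => ∑ j, A i j))
    (k : ℕ) (i j : Fin n) :
    (nbtwP A D k) i j = (nbtwCount A k i j : ℝ) := by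
  open NBTaux in
  induction k using Nat.strong_induction_on generalizing i j with
  | _ k ih =>
    match k with
    | 0 =>
      rw [nbtwCount_eq, card0]
      show (1 : Matrix (Fin n) (Fin n) ℝ) i j = _
      rw [Matrix.one_apply]
      split <;> simp
    | 1 =>
      rw [nbtwCount_eq, card1]
      show A i j = _
      rcases h01 i j with h | h
      · rw [if_neg (by rw [h]; norm_num), h]; norm_num
      · rw [if_pos h, h]; norm_num
    | 2 =>
      rw [nbtwCount_eq, card2]
      show (A * A - D) i j = _
      rw [Matrix.sub_apply, Matrix.mul_apply, hD]
      by_cases hij : i = j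
      · subst hij
        haveI : IsEmpty {l : Fin n // (A i l = 1 ∧ A l i = 1) ∧ i ≠ i} :=
          ⟨fun l => l.2.2 rfl⟩
        rw [Nat.card_of_isEmpty, Matrix.diagonal_apply_eq]
        have h2 : ∑ l, A i l * A l i = ∑ l, A i l :=
          Finset.sum_congr rfl fun l _ => by
            rw [hsymm.apply i l]
            rcases h01 i l with h | h <;> simp [h]
        rw [h2, sub_self]
        norm_num
      · rw [Matrix.diagonal_apply_ne _ hij, sub_zero]
        have h2 : Nat.card {l : Fin n // (A i l = 1 ∧ A l j = 1) ∧ i ≠ j}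
            = Nat.card {l : Fin n // A i l = 1 ∧ A l j = 1} :=
          Nat.card_congr (Equiv.subtypeEquivRight fun l => and_iff_left hij)
        rw [h2, card_real]
        apply Finset.sum_congr rfl
        intro l _
        rcases h01 i l with h | h <;> rcases h01 l j with h' | h' <;> simp [h, h']
    | (m + 3) =>
      show (A * nbtwP A D (m + 2) - (D - 1) * nbtwP A D (m + 1)) i j = _
      have hDM : ∀ M : Matrix (Fin n) (Fin n) ℝ,
          ((D - 1) * M) i j = ((∑ t, A i t) - 1) * M i j := by
        intro M
        rw [Matrix.sub_mul, Matrix.one_mul, Matrix.sub_apply, hD, Matrix.diagonal_mul]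
        ring
      rw [Matrix.sub_apply, Matrix.mul_apply, hDM, ih (m + 1) (by omega)]
      have e1 : ∑ l, A i l * nbtwP A D (m + 2) l j
          = ∑ l, if A i l = 1 then ((nbtwCount A (m + 2) l j : ℕ) : ℝ) else 0 :=
        Finset.sum_congr rfl fun l _ => by
          rw [ih (m + 2) (by omega)]
          rcases h01 i l with h | h <;> simp [h]
      rw [e1]
      have keyN := key A hsymm m i j
      simp only [← nbtwCount_eq] at keyN
      have hdr : ∑ t, A i t = ((d A i : ℕ) : ℝ) := by
        show _ = ((Nat.card {l : Fin n // A i l = 1} : ℕ) : ℝ)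
        rw [card_real]
        apply Finset.sum_congr rfl
        intro t _
        rcases h01 i t with h | h <;> simp [h]
      have hcast : (∑ l, if A i l = 1 then ((nbtwCount A (m + 2) l j : ℕ) : ℝ) else 0)
          = ((∑ l, if A i l = 1 then nbtwCount A (m + 2) l j else 0 : ℕ) : ℝ) := by
        push_cast [apply_ite]
        rfl
      rw [hcast, keyN]
      rcases Nat.eq_zero_or_pos (nbtwCount A (m + 1) i j) with hc | hc
      · rw [hc]
        push_cast
        ring
      · have hne : Nonempty {v : Fin (m + 2) → Fin n // P A (m + 1) i j v} := by
          rw [nbtwCount_eq] at hc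
          exact (Nat.card_pos_iff.mp hc).1
        obtain ⟨v⟩ := hne
        haveI : Nonempty {l : Fin n // A i l = 1} := ⟨⟨v.1 1, P_edge0 A v.2⟩⟩
        have hd : 1 ≤ d A i := Nat.card_pos
        rw [hdr]
        push_cast [Nat.cast_sub hd]
        ring
end

section
/- Let A be the adjacency matrix of a finite simple undirected graph, D its degree matrix, and let P_k be the matrices counting non-backtracking walks of length k (satisfying the recurrence P_k = A P_{k−1} − (D−I) P_{k−2} for k ≥ 3, with P₀ = I, P₁ = A, P₂ = A² − D). Then as formal power series (or for α small enough), (1 − α²)(I − αA + α²(D − I))^{-1} = Σ_{k=0}^∞ α^k P_k. -/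
open Matrix Finset Filter

section Aux

attribute [local instance] Matrix.linftyOpNormedRing Matrix.linftyOpNormedAlgebra

private lemma nbtw_base {n : ℕ} (A D : Matrix (Fin n) (Fin n) ℝ) (α : ℝ) :
    (1 - α • A + (α ^ 2) • (D - 1)) * ((1:Matrix (Fin n) (Fin n) ℝ) + α • A + α ^ 2 • (A * A - D)) =
      (1 - α ^ 2) • 1 - α ^ 3 • (A * (A * A - D)) + α ^ 3 • ((D-1) * A)
        + α ^ 4 • ((D-1) * (A * A - D)) := by
  simp only [mul_add, mul_sub, sub_mul, add_mul, mul_one, one_mul, mul_smul_comm,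
    smul_mul_assoc, smul_smul, smul_sub, smul_add]
  module

private lemma nbtw_step {n : ℕ} (A D S Q : Matrix (Fin n) (Fin n) ℝ) (α : ℝ) (m : ℕ) :
    ((1 - α ^ 2) • 1 - α ^ (m+3) • (A * S) + α ^ (m+3) • ((D-1) * Q)
        + α ^ (m+4) • ((D-1) * S))
      + (1 - α • A + (α ^ 2) • (D - 1)) * (α ^ (m+3) • (A * S - (D-1) * Q)) =
    (1 - α ^ 2) • 1 - α ^ (m+4) • (A * (A * S - (D-1) * Q)) + α ^ (m+4) • ((D-1) * S)
        + α ^ (m+5) • ((D-1) * (A * S - (D-1) * Q)) := by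
  simp only [mul_add, mul_sub, sub_mul, add_mul, mul_one, one_mul, mul_smul_comm,
    smul_mul_assoc, smul_smul, smul_sub, smul_add]
  have h3 : α ^ (m+3) * α ^ 2 = α ^ (m+5) := by ring
  have h1 : α ^ (m+3) * α = α ^ (m+4) := by ring
  rw [mul_comm (α ^ (m+3)) α, mul_comm (α ^ (m+3)) (α^2),
    mul_comm α (α ^ (m+3)), mul_comm (α^2) (α ^ (m+3)), h3, h1]
  module

set_option maxHeartbeats 4000000 in
theorem nbtw_generating_function {n : ℕ} (A : Matrix (Fin n) (Fin n) ℝ)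
    (hsymm : A.IsSymm) (h01 : ∀ i j, A i j = 0 ∨ A i j = 1) (hdiag : ∀ i, A i i = 0)
    (D : Matrix (Fin n) (Fin n) ℝ) (hD : D = Matrix.diagonal (fun i => ∑ j, A i j))
    (P : ℕ → Matrix (Fin n) (Fin n) ℝ)
    (hP0 : P 0 = 1) (hP1 : P 1 = A) (hP2 : P 2 = A * A - D)
    (hPrec : ∀ k : ℕ, P (k + 3) = A * P (k + 2) - (D - 1) * P (k + 1)) :
    ∃ μ > (0 : ℝ), ∀ α : ℝ, 0 < α → α < μ →
      IsUnit (1 - α • A + (α ^ 2) • (D - 1)) ∧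
      HasSum (fun k : ℕ => α ^ k • P k)
        ((1 - α ^ 2) • (1 - α • A + (α ^ 2) • (D - 1))⁻¹) := by
  haveI : CompleteSpace (Matrix (Fin n) (Fin n) ℝ) := FiniteDimensional.complete ℝ _
  obtain ⟨B, hBdef⟩ : ∃ b : ℝ, b = ‖A‖ + ‖D - 1‖ + 1 := ⟨_, rfl⟩
  have hA0 : (0:ℝ) ≤ ‖A‖ := norm_nonneg _
  have hD0 : (0:ℝ) ≤ ‖D - 1‖ := norm_nonneg _
  have hB1 : (1:ℝ) ≤ B := by rw [hBdef]; linarith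
  have hB0 : (0:ℝ) < B := by linarith
  obtain ⟨C, hCdef⟩ : ∃ c : ℝ, c = ‖P 0‖ + ‖P 1‖ + ‖P 2‖ + 1 := ⟨_, rfl⟩
  have hn0 : (0:ℝ) ≤ ‖P 0‖ := norm_nonneg _
  have hn1 : (0:ℝ) ≤ ‖P 1‖ := norm_nonneg _
  have hn2 : (0:ℝ) ≤ ‖P 2‖ := norm_nonneg _
  have hC0 : (0:ℝ) < C := by rw [hCdef]; linarith
  -- geometric bound on P
  have key : ∀ k, ‖P k‖ ≤ C * B ^ k ∧ ‖P (k+1)‖ ≤ C * B ^ (k+1) ∧ ‖P (k+2)‖ ≤ C * B ^ (k+2) := by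
    intro k
    induction k with
    | zero =>
      have h0 : ‖P 0‖ ≤ C := by rw [hCdef]; linarith
      have h1 : ‖P 1‖ ≤ C := by rw [hCdef]; linarith
      have h2 : ‖P 2‖ ≤ C := by rw [hCdef]; linarith
      have hBp1 : (1:ℝ) ≤ B ^ (0+1) := one_le_pow₀ hB1
      have hBp2 : (1:ℝ) ≤ B ^ (0+2) := one_le_pow₀ hB1
      exact ⟨by simpa using h0, h1.trans (by nlinarith), h2.trans (by nlinarith)⟩
    | succ m ih =>
      obtain ⟨-, h1, h2⟩ := ih
      refine ⟨h1, h2, ?_⟩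
      have hBm : (0:ℝ) < B ^ (m+2) := pow_pos hB0 _
      have hBm' : B ^ (m+1) ≤ B ^ (m+2) := pow_le_pow_right₀ hB1 (by omega)
      calc ‖P (m+1+2)‖ = ‖A * P (m+2) - (D-1) * P (m+1)‖ := by
            rw [show m+1+2 = m+3 from rfl, hPrec m]
        _ ≤ ‖A * P (m+2)‖ + ‖(D-1) * P (m+1)‖ := norm_sub_le _ _
        _ ≤ ‖A‖ * ‖P (m+2)‖ + ‖D-1‖ * ‖P (m+1)‖ := by
            gcongr <;> exact norm_mul_le _ _
        _ ≤ ‖A‖ * (C * B ^ (m+2)) + ‖D-1‖ * (C * B ^ (m+2)) := by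
            gcongr
            exact h1.trans (by nlinarith)
        _ = (‖A‖ + ‖D-1‖) * (C * B ^ (m+2)) := by ring
        _ ≤ B * (C * B ^ (m+2)) := by
            apply mul_le_mul_of_nonneg_right _ (by positivity)
            rw [hBdef]; linarith
        _ = C * B ^ (m+1+2) := by ring
  refine ⟨1 / B, by positivity, fun α hα hαμ => ?_⟩
  have hαB : α * B < 1 := by
    rw [div_eq_mul_inv, one_mul] at hαμ
    calc α * B < B⁻¹ * B := by gcongr
      _ = 1 := inv_mul_cancel₀ (ne_of_gt hB0)
  have hα1 : α < 1 := by nlinarith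
  have hαB0 : 0 ≤ α * B := by positivity
  obtain ⟨M, hMdef⟩ : ∃ m : Matrix (Fin n) (Fin n) ℝ, m = 1 - α • A + (α ^ 2) • (D - 1) := ⟨_, rfl⟩
  rw [← hMdef]
  have hMform : M = 1 - (α • A - (α ^ 2) • (D - 1)) := by rw [hMdef]; abel
  have hnorm : ‖α • A - (α ^ 2) • (D - 1)‖ < 1 := by
    have hexp : α * B = α * ‖A‖ + α * ‖D - 1‖ + α := by rw [hBdef]; ring
    have hD2 : α ^ 2 * ‖D - 1‖ ≤ α * ‖D - 1‖ := by nlinarith [mul_nonneg (mul_nonneg hα.le (by linarith : (0:ℝ) ≤ 1 - α)) hD0]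
    calc ‖α • A - (α ^ 2) • (D - 1)‖ ≤ ‖α • A‖ + ‖(α ^ 2) • (D - 1)‖ := norm_sub_le _ _
      _ = |α| * ‖A‖ + |α ^ 2| * ‖D - 1‖ := by
          rw [norm_smul, norm_smul, Real.norm_eq_abs, Real.norm_eq_abs]
      _ = α * ‖A‖ + α ^ 2 * ‖D - 1‖ := by rw [abs_of_pos hα, abs_of_pos (by positivity)]
      _ < 1 := by linarith
  have hunit : IsUnit M := hMform ▸ (Units.oneSub _ hnorm).isUnit
  have hdet : IsUnit M.det := (Matrix.isUnit_iff_isUnit_det M).mp hunit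
  -- summability
  have hsumm : Summable (fun k : ℕ => α ^ k • P k) := by
    have hb : ∀ k : ℕ, ‖α ^ k • P k‖ ≤ C * (α * B) ^ k := by
      intro k
      rw [norm_smul, Real.norm_eq_abs, abs_of_pos (pow_pos hα k)]
      calc α ^ k * ‖P k‖ ≤ α ^ k * (C * B ^ k) := by
            have := (key k).1
            exact mul_le_mul_of_nonneg_left this (le_of_lt (pow_pos hα k))
        _ = C * (α * B) ^ k := by rw [mul_pow]; ring
    apply Summable.of_norm
    apply Summable.of_nonneg_of_le (fun k => norm_nonneg _) hb
    exact (summable_geometric_of_lt_one hαB0 hαB).mul_left C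
  obtain ⟨L, hLdef⟩ : ∃ l : Matrix (Fin n) (Fin n) ℝ, l = ∑' k, α ^ k • P k := ⟨_, rfl⟩
  have hL : HasSum (fun k : ℕ => α ^ k • P k) L := hLdef ▸ hsumm.hasSum
  -- telescoping formula
  have htel : ∀ m : ℕ, M * (∑ k ∈ range (m+3), α ^ k • P k) =
      (1 - α ^ 2) • 1 - α ^ (m+3) • (A * P (m+2)) + α ^ (m+3) • ((D-1) * P (m+1))
        + α ^ (m+4) • ((D-1) * P (m+2)) := by
    intro m
    induction m with
    | zero =>
      simp only [Finset.sum_range_succ, Finset.sum_range_zero, zero_add, pow_zero, pow_one,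
        one_smul, hP0, hP1, hP2, hMdef]
      exact nbtw_base A D α
    | succ m ih =>
      rw [show m+1+3 = (m+3)+1 from rfl, Finset.sum_range_succ, mul_add, ih]
      rw [show m+3 = m+3 from rfl]
      rw [show m+1+2 = m+3 from rfl, show m+1+4 = m+5 from rfl, show m+1+1 = m+2 from rfl,
        show m+1+1+1 = m+3 from rfl]
      rw [hPrec m, hMdef]
      rw [show m+3+1 = m+4 from rfl]
      exact nbtw_step A D (P (m+2)) (P (m+1)) α m
  -- limits
  have hten1 : Tendsto (fun m : ℕ => M * (∑ k ∈ range (m+3), α ^ k • P k))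
      atTop (nhds (M * L)) := by
    have h1 : Tendsto (fun N : ℕ => ∑ k ∈ range N, α ^ k • P k) atTop (nhds L) :=
      hL.tendsto_sum_nat
    exact (h1.comp (tendsto_add_atTop_nat 3)).const_mul M
  have hzero : ∀ (X : Matrix (Fin n) (Fin n) ℝ) (c : ℕ) (j : ℕ → ℕ), (∀ m, j m ≤ m + c) →
      Tendsto (fun m : ℕ => α ^ (m + c) • (X * P (j m))) atTop (nhds 0) := by
    intro X c j hj
    have htend : Tendsto (fun m : ℕ => (‖X‖ * C * (α*B) ^ c) * (α * B) ^ m) atTop (nhds 0) := by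
      have := (tendsto_pow_atTop_nhds_zero_of_lt_one hαB0 hαB).const_mul (‖X‖ * C * (α*B) ^ c)
      simpa using this
    apply squeeze_zero_norm _ htend
    intro m
    show ‖α ^ (m + c) • (X * P (j m))‖ ≤ _
    have hPj : ‖P (j m)‖ ≤ C * B ^ (m + c) := by
      calc ‖P (j m)‖ ≤ C * B ^ (j m) := (key (j m)).1
        _ ≤ C * B ^ (m + c) := by
            apply mul_le_mul_of_nonneg_left (pow_le_pow_right₀ hB1 (hj m)) (le_of_lt hC0)
    rw [norm_smul, Real.norm_eq_abs, abs_of_pos (pow_pos hα _)]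
    calc α ^ (m+c) * ‖X * P (j m)‖ ≤ α ^ (m+c) * (‖X‖ * (C * B ^ (m+c))) := by
          apply mul_le_mul_of_nonneg_left _ (le_of_lt (pow_pos hα _))
          calc ‖X * P (j m)‖ ≤ ‖X‖ * ‖P (j m)‖ := norm_mul_le _ _
            _ ≤ ‖X‖ * (C * B ^ (m+c)) := mul_le_mul_of_nonneg_left hPj (norm_nonneg X)
      _ = (‖X‖ * C * (α*B) ^ c) * (α * B) ^ m := by rw [mul_pow, mul_pow]; ring
  have hten2 : Tendsto (fun m : ℕ => (1 - α ^ 2) • (1:Matrix (Fin n) (Fin n) ℝ)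
      - α ^ (m+3) • (A * P (m+2)) + α ^ (m+3) • ((D-1) * P (m+1))
      + α ^ (m+4) • ((D-1) * P (m+2))) atTop (nhds ((1 - α ^ 2) • 1)) := by
    have t1 := hzero A 3 (fun m => m+2) (fun m => Nat.le_succ _)
    have t2 := hzero (D-1) 3 (fun m => m+1) (fun m => Nat.le_succ_of_le (Nat.le_succ _))
    have t3 := hzero (D-1) 4 (fun m => m+2) (fun m => Nat.le_succ_of_le (Nat.le_succ _))
    have hc : Tendsto (fun _ : ℕ => (1 - α ^ 2) • (1 : Matrix (Fin n) (Fin n) ℝ)) atTop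
        (nhds ((1 - α ^ 2) • 1)) := tendsto_const_nhds
    have := ((hc.sub t1).add t2).add t3
    simpa using this
  have hML : M * L = (1 - α ^ 2) • 1 := by
    apply tendsto_nhds_unique hten1
    have : (fun m : ℕ => M * (∑ k ∈ range (m+3), α ^ k • P k)) =
        (fun m : ℕ => (1 - α ^ 2) • (1:Matrix (Fin n) (Fin n) ℝ)
          - α ^ (m+3) • (A * P (m+2)) + α ^ (m+3) • ((D-1) * P (m+1))
          + α ^ (m+4) • ((D-1) * P (m+2))) := funext htel
    rw [this]
    exact hten2
  have hLval : L = (1 - α ^ 2) • M⁻¹ := by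
    have h := congrArg (fun X => M⁻¹ * X) hML
    rw [← mul_assoc, Matrix.nonsing_inv_mul M hdet, one_mul, mul_smul_comm, mul_one] at h
    exact h
  rw [hLval] at hL
  exact ⟨hunit, hL⟩

end Aux
end
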